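/- If T ∈ B(H) is an m-isometry for some m ≥ 1, then the spectral radius of T equals 1. -/

import Mathlib

open Finset Filter Function
open scoped fwdDiff NNReal ENNReal

lemma myFwdDiff_iter_zero (i : ℕ) : (Δ_[(1:ℕ)])^[i] (fun _ : ℕ => (0:ℝ)) = fun _ => 0 := by
  induction i with
  | zero => rfl
  | succ i ih => rw [Function.iterate_succ_apply, fwdDiff_const, ih]

lemma myFwdDiff_iter_eq_zero_of_le {b : ℕ → ℝ} {m : ℕ} (hb : (Δ_[(1:ℕ)])^[m] b = fun _ => 0)
    {k : ℕ} (hk : m ≤ k) : (Δ_[(1:ℕ)])^[k] b = fun _ => 0 := by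
  obtain ⟨i, rfl⟩ := Nat.exists_eq_add_of_le hk
  rw [add_comm, Function.iterate_add_apply, hb, myFwdDiff_iter_zero]

lemma myNewton {b : ℕ → ℝ} {m : ℕ} (hb : (Δ_[(1:ℕ)])^[m] b = fun _ => 0) (n : ℕ) :
    b n = ∑ k ∈ range m, (n.choose k : ℝ) * (Δ_[(1:ℕ)])^[k] b 0 := by
  have h1 := shift_eq_sum_fwdDiff_iter 1 b n 0
  simp only [smul_eq_mul, mul_one, zero_add, nsmul_eq_mul] at h1
  rw [h1]
  rcases le_total (n+1) m with h | h
  · apply Finset.sum_subset (Finset.range_subset_range.mpr h)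
    intro k hk hk'
    have : n < k := by simpa using hk'
    rw [Nat.choose_eq_zero_of_lt this]; simp
  · symm
    apply Finset.sum_subset (Finset.range_subset_range.mpr h)
    intro k hk hk'
    have hmk : m ≤ k := by simpa using hk'
    rw [myFwdDiff_iter_eq_zero_of_le hb hmk]; simp

lemma myVanish {m : ℕ} : ∀ b : ℕ → ℝ, (Δ_[(1:ℕ)])^[m] b = (fun _ => 0) →
    Tendsto b atTop (nhds 0) → ∀ n, b n = 0 := by
  induction m with
  | zero => intro b hb _ n; exact congrFun hb n
  | succ m ih =>
    intro b hb hlim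
    have hΔ : (Δ_[(1:ℕ)])^[m] (Δ_[(1:ℕ)] b) = fun _ => 0 := by
      rw [← Function.iterate_succ_apply]; exact hb
    have hΔlim : Tendsto (Δ_[(1:ℕ)] b) atTop (nhds 0) := by
      have h1 : Tendsto (fun n => b (n+1)) atTop (nhds 0) := hlim.comp (tendsto_add_atTop_nat 1)
      simpa using (h1.sub hlim).congr (f₂ := Δ_[(1:ℕ)] b) fun n => rfl
    have hconst : ∀ n, b n = b 0 := by
      intro n; induction n with
      | zero => rfl
      | succ n ihn =>
        have h2 : b (n+1) - b n = 0 := ih (Δ_[(1:ℕ)] b) hΔ hΔlim n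
        have : b (n+1) = b n := by linarith
        rw [this, ihn]
    have hb0 : b 0 = 0 := by
      have : Tendsto (fun _ : ℕ => b 0) atTop (nhds 0) := by
        refine hlim.congr fun n => (hconst n)
      exact tendsto_nhds_unique tendsto_const_nhds this
    intro n; rw [hconst n, hb0]

/-- an `m`-isometry (`m ≥ 1`) on a (nonzero) complex Hilbert space has
spectral radius `1`. -/
theorem spectralRadius_of_m_isometry
    {H : Type*} [NormedAddCommGroup H] [InnerProductSpace ℂ H] [CompleteSpace H]
    [Nontrivial H]
    (T : H →L[ℂ] H) (m : ℕ) (hm : 1 ≤ m)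
    (hT : ∀ x : H,
      ∑ k ∈ Finset.range (m + 1), (-1 : ℝ) ^ k * (m.choose k : ℝ) * ‖(T ^ k) x‖ ^ 2 = 0) :
    spectralRadius ℂ T = 1 := by
  -- the m-th forward difference of `n ↦ ‖Tⁿ x‖²` vanishes
  have hΔm : ∀ x : H, (Δ_[(1:ℕ)])^[m] (fun n => ‖(T ^ n) x‖ ^ 2) = fun _ => (0:ℝ) := by
    intro x
    funext y
    show (Δ_[(1:ℕ)])^[m] (fun n => ‖(T ^ n) x‖ ^ 2) y = 0
    rw [fwdDiff_iter_eq_sum_shift]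
    have hpow : ∀ k : ℕ, (T ^ (y + k)) x = (T ^ k) ((T ^ y) x) := by
      intro k
      rw [add_comm, pow_add, ContinuousLinearMap.mul_apply]
    have key : ∀ k ∈ range (m+1), ((-1:ℤ)^(m-k) * (m.choose k)) • ‖(T ^ (y + k • 1)) x‖ ^ 2
        = (-1:ℝ)^m * ((-1:ℝ)^k * (m.choose k) * ‖(T ^ k) ((T ^ y) x)‖^2) := by
      intro k hk
      have hk' : k ≤ m := Nat.lt_succ_iff.mp (mem_range.mp hk)
      have hsgn : (-1:ℝ)^(m-k) = (-1:ℝ)^m * (-1:ℝ)^k := by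
        rw [← pow_add, show m + k = (m-k) + 2*k by omega, pow_add, pow_mul, neg_one_sq, one_pow,
          mul_one]
      have h1 : y + k • 1 = y + k := by simp
      rw [h1, hpow k, zsmul_eq_mul]
      push_cast
      rw [hsgn]
      ring
    rw [Finset.sum_congr rfl key, ← Finset.mul_sum, hT ((T ^ y) x), mul_zero]
  -- growth bound
  set M : ℝ := ∑ i ∈ range (m+1), ‖T ^ i‖^2 with hM
  have hM0 : 0 ≤ M := Finset.sum_nonneg fun i _ => sq_nonneg _
  have hcbound : ∀ (x : H), ∀ k, k ≤ m →
      |(Δ_[(1:ℕ)])^[k] (fun n => ‖(T ^ n) x‖ ^ 2) 0| ≤ 2^m * M * ‖x‖^2 := by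
    intro x
    have hfle : ∀ i : ℕ, i ≤ m → ‖(T ^ i) x‖ ^ 2 ≤ M * ‖x‖^2 := by
      intro i hi
      have h1 : ‖(T ^ i) x‖ ≤ ‖T ^ i‖ * ‖x‖ := (T ^ i).le_opNorm x
      have h2 : ‖(T ^ i) x‖ ^ 2 ≤ (‖T ^ i‖ * ‖x‖)^2 := by
        apply pow_le_pow_left₀ (norm_nonneg _) h1
      refine h2.trans ?_
      rw [mul_pow]
      have h3 : ‖T ^ i‖^2 ≤ M :=
        Finset.single_le_sum (f := fun i => ‖T ^ i‖^2) (fun j _ => sq_nonneg _)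
          (mem_range.mpr (Nat.lt_succ_of_le hi))
      exact mul_le_mul_of_nonneg_right h3 (sq_nonneg _)
    have hMx : 0 ≤ M * ‖x‖^2 := mul_nonneg hM0 (sq_nonneg _)
    intro k hk
    rw [fwdDiff_iter_eq_sum_shift]
    calc |∑ i ∈ range (k+1), ((-1:ℤ)^(k-i) * (k.choose i)) • ‖(T ^ ((0:ℕ) + i • 1)) x‖ ^ 2|
        ≤ ∑ i ∈ range (k+1), |((-1:ℤ)^(k-i) * (k.choose i)) • ‖(T ^ ((0:ℕ) + i • 1)) x‖ ^ 2| :=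
          Finset.abs_sum_le_sum_abs _ _
      _ ≤ ∑ i ∈ range (k+1), (k.choose i : ℝ) * (M * ‖x‖^2) := by
          apply Finset.sum_le_sum
          intro i hi
          have hi' : i ≤ k := Nat.lt_succ_iff.mp (mem_range.mp hi)
          have h0 : (0:ℕ) + i • 1 = i := by simp
          rw [h0, zsmul_eq_mul, abs_mul]
          push_cast
          rw [abs_mul, abs_pow, abs_neg, abs_one, one_pow, one_mul, Nat.abs_cast,
            abs_of_nonneg (sq_nonneg _)]
          exact mul_le_mul_of_nonneg_left (by simpa using hfle i (hi'.trans hk)) (by positivity)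
      _ = (2:ℝ)^k * (M * ‖x‖^2) := by
          rw [← Finset.sum_mul]
          congr 1
          norm_cast
          exact Nat.sum_range_choose k
      _ ≤ 2^m * (M * ‖x‖^2) := by
          apply mul_le_mul_of_nonneg_right _ hMx
          exact pow_le_pow_right₀ one_le_two hk
      _ = 2^m * M * ‖x‖^2 := by ring
  set K : ℝ := m * (2^m * M) + 1 with hK
  have hbound : ∀ (n : ℕ) (x : H), ‖(T ^ n) x‖ ^ 2 ≤ K * ((n:ℝ)+1)^m * ‖x‖^2 := by
    intro n x
    have hB : 0 ≤ 2^m * M * ‖x‖^2 :=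
      mul_nonneg (mul_nonneg (by positivity) hM0) (sq_nonneg _)
    calc ‖(T ^ n) x‖ ^ 2
        = ∑ k ∈ range m, (n.choose k : ℝ) * (Δ_[(1:ℕ)])^[k] (fun n => ‖(T ^ n) x‖ ^ 2) 0 :=
          myNewton (hΔm x) n
      _ ≤ ∑ k ∈ range m, ((n:ℝ)+1)^m * (2^m * M * ‖x‖^2) := by
          apply Finset.sum_le_sum
          intro k hk
          have hk' : k ≤ m := le_of_lt (mem_range.mp hk)
          have hc := hcbound x k hk'
          have hch : (n.choose k : ℝ) ≤ ((n:ℝ)+1)^m := by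
            have hnat : n.choose k ≤ (n+1)^m :=
              calc n.choose k ≤ n ^ k := Nat.choose_le_pow n k
                _ ≤ (n+1) ^ k := Nat.pow_le_pow_left (Nat.le_succ n) k
                _ ≤ (n+1) ^ m := Nat.pow_le_pow_right (Nat.succ_pos n) hk'
            exact_mod_cast hnat
          calc (n.choose k : ℝ) * (Δ_[(1:ℕ)])^[k] (fun n => ‖(T ^ n) x‖ ^ 2) 0
              ≤ (n.choose k : ℝ) * |(Δ_[(1:ℕ)])^[k] (fun n => ‖(T ^ n) x‖ ^ 2) 0| :=
                mul_le_mul_of_nonneg_left (le_abs_self _) (Nat.cast_nonneg _)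
            _ ≤ ((n:ℝ)+1)^m * (2^m * M * ‖x‖^2) :=
                mul_le_mul hch hc (abs_nonneg _) (by positivity)
      _ = m * (((n:ℝ)+1)^m * (2^m * M * ‖x‖^2)) := by
          rw [Finset.sum_const, Finset.card_range, nsmul_eq_mul]
      _ ≤ K * ((n:ℝ)+1)^m * ‖x‖^2 := by
          have h1 : (0:ℝ) ≤ ((n:ℝ)+1)^m * ‖x‖^2 := by positivity
          have h2 : K * ((n:ℝ)+1)^m * ‖x‖^2
              = m * (((n:ℝ)+1)^m * (2^m * M * ‖x‖^2)) + ((n:ℝ)+1)^m * ‖x‖^2 := by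
            rw [hK]; ring
          linarith
  -- upper estimate: spectral radius ≤ 1
  have upper : spectralRadius ℂ T ≤ 1 := by
    have upper' : ∀ r : ℝ≥0, 1 < r → spectralRadius ℂ T ≤ (r : ℝ≥0∞) := by
      intro r hr
      have hr1 : (1:ℝ) < (r:ℝ) := hr
      have hr0 : (0:ℝ) < (r:ℝ) := lt_trans one_pos hr1
      have hr2 : (1:ℝ) < (r:ℝ)^2 := one_lt_pow₀ hr1 two_ne_zero
      have htend : Tendsto (fun n : ℕ => K * ((n:ℝ)+1)^m / ((r:ℝ)^2)^n) atTop (nhds 0) := by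
        have h := (tendsto_pow_const_div_const_pow_of_one_lt m hr2).comp (tendsto_add_atTop_nat 1)
        have h2 := h.const_mul (K * (r:ℝ)^2)
        rw [mul_zero] at h2
        refine h2.congr fun n => ?_
        show K * (r:ℝ)^2 * (((n+1:ℕ):ℝ)^m / ((r:ℝ)^2)^(n+1)) = _
        push_cast
        rw [pow_succ]
        field_simp
        ring
      have hev : ∀ᶠ n : ℕ in atTop, K * ((n:ℝ)+1)^m / ((r:ℝ)^2)^n < 1 :=
        htend.eventually_lt_const one_pos
      obtain ⟨n, hn1, hn2⟩ := (hev.and (eventually_ge_atTop 1)).exists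
      obtain ⟨j, rfl⟩ : ∃ j, n = j + 1 := ⟨n - 1, by omega⟩
      set n := j + 1
      have hrn : K * ((n:ℝ)+1)^m ≤ ((r:ℝ)^2)^n := by
        have hpos : (0:ℝ) < ((r:ℝ)^2)^n := by positivity
        have := (div_lt_one hpos).mp hn1
        linarith
      have hop : ‖T ^ n‖₊ ≤ r ^ n := by
        have hb : ∀ x : H, ‖(T ^ n) x‖ ≤ (r:ℝ)^n * ‖x‖ := by
          intro x
          have h1 : ‖(T ^ n) x‖ ^ 2 ≤ ((r:ℝ)^n * ‖x‖)^2 := by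
            calc ‖(T ^ n) x‖ ^ 2 ≤ K * ((n:ℝ)+1)^m * ‖x‖^2 := hbound n x
              _ ≤ ((r:ℝ)^2)^n * ‖x‖^2 := mul_le_mul_of_nonneg_right hrn (sq_nonneg _)
              _ = ((r:ℝ)^n * ‖x‖)^2 := by rw [← pow_mul, mul_comm 2 n, pow_mul]; ring
          exact (abs_le_of_sq_le_sq' h1 (by positivity)).2
        have : ‖T ^ n‖ ≤ (r:ℝ)^n := (T ^ n).opNorm_le_bound (by positivity) hb
        exact this
      have hle := spectrum.spectralRadius_le_pow_nnnorm_pow_one_div ℂ T j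
      rw [nnnorm_one, ENNReal.coe_one, ENNReal.one_rpow, mul_one] at hle
      refine hle.trans ?_
      have hcast : ((‖T ^ n‖₊ : ℝ≥0∞)) ≤ ((r : ℝ≥0∞)) ^ (n : ℕ) := by
        rw [← ENNReal.coe_pow]
        exact_mod_cast hop
      calc (‖T ^ n‖₊ : ℝ≥0∞) ^ (1 / ((j:ℝ) + 1)) ≤ ((r : ℝ≥0∞) ^ (n : ℕ)) ^ (1 / ((j:ℝ) + 1)) :=
            ENNReal.rpow_le_rpow hcast (by positivity)
        _ = (r : ℝ≥0∞) ^ ((n : ℝ) * (1 / ((j:ℝ) + 1))) := by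
            rw [← ENNReal.rpow_natCast, ← ENNReal.rpow_mul]
        _ = (r : ℝ≥0∞) ^ (1 : ℝ) := by
            congr 1
            push_cast [n]
            field_simp
        _ = r := ENNReal.rpow_one _
    by_contra hc
    push_neg at hc
    obtain ⟨r, hu1, hu2⟩ := ENNReal.lt_iff_exists_nnreal_btwn.mp hc
    exact absurd (upper' r (by exact_mod_cast hu1)) (not_le.mpr hu2)
  -- lower estimate: 1 ≤ spectral radius
  have lower : (1 : ℝ≥0∞) ≤ spectralRadius ℂ T := by
    by_contra hc
    push_neg at hc
    obtain ⟨r, hr1, hr2⟩ := ENNReal.lt_iff_exists_nnreal_btwn.mp hc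
    have hr2' : r < 1 := by exact_mod_cast hr2
    have htd := spectrum.pow_nnnorm_pow_one_div_tendsto_nhds_spectralRadius T
    have hev : ∀ᶠ n : ℕ in atTop, (‖T ^ n‖₊ : ℝ≥0∞) ^ (1 / (n:ℝ)) < (r : ℝ≥0∞) :=
      htd.eventually_lt_const hr1
    have hnorm : ∀ᶠ n : ℕ in atTop, ∀ x : H, ‖(T ^ n) x‖ ≤ (r:ℝ)^n * ‖x‖ := by
      filter_upwards [hev, eventually_ge_atTop 1] with n hn hn1 x
      have hlt : (‖T ^ n‖₊ : ℝ≥0∞) < (r : ℝ≥0∞) ^ (n : ℕ) := by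
        have h0 : (‖T ^ n‖₊ : ℝ≥0∞) = ((‖T ^ n‖₊ : ℝ≥0∞) ^ (1 / (n:ℝ))) ^ (n : ℕ) := by
          rw [← ENNReal.rpow_natCast _ n, ← ENNReal.rpow_mul, one_div,
            inv_mul_cancel₀ (Nat.cast_ne_zero.mpr (by omega) : (n:ℝ) ≠ 0), ENNReal.rpow_one]
        rw [h0]
        exact ENNReal.pow_lt_pow_left (by omega) hn
      have hle : ‖T ^ n‖ ≤ (r:ℝ)^n := by
        have : ‖T ^ n‖₊ ≤ r ^ n := by
          rw [← ENNReal.coe_pow] at hlt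
          exact_mod_cast hlt.le
        exact_mod_cast this
      calc ‖(T ^ n) x‖ ≤ ‖T ^ n‖ * ‖x‖ := (T ^ n).le_opNorm x
        _ ≤ (r:ℝ)^n * ‖x‖ := mul_le_mul_of_nonneg_right hle (norm_nonneg x)
    obtain ⟨x, hx⟩ := exists_ne (0 : H)
    have hlim : Tendsto (fun n => ‖(T ^ n) x‖ ^ 2) atTop (nhds 0) := by
      apply squeeze_zero' (Eventually.of_forall fun n => sq_nonneg _)
        (g := fun n => ((r:ℝ)^2)^n * ‖x‖^2)
      · filter_upwards [hnorm] with n hn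
        calc ‖(T ^ n) x‖ ^ 2 ≤ ((r:ℝ)^n * ‖x‖)^2 :=
              pow_le_pow_left₀ (norm_nonneg _) (hn x) 2
          _ = ((r:ℝ)^2)^n * ‖x‖^2 := by rw [mul_pow, ← pow_mul, mul_comm n 2, pow_mul]
      · have h1 : Tendsto (fun n : ℕ => ((r:ℝ)^2)^n) atTop (nhds 0) := by
          apply tendsto_pow_atTop_nhds_zero_of_lt_one (by positivity)
          nlinarith [r.coe_nonneg, (show (r:ℝ) < 1 from hr2')]
        simpa using h1.mul_const (‖x‖^2)
    have hzero := myVanish _ (hΔm x) hlim 0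
    simp only [pow_zero, ContinuousLinearMap.one_apply] at hzero
    exact hx (by simpa [sq_eq_zero_iff, norm_eq_zero] using hzero)
  exact le_antisymm upper lower
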